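/- Let μ be a probability measure on ℝ^d and define the kernel K : ℝ^d → ℝ by K(u) = ∫_{ℝ^d} cos(⟨ω, u⟩) dμ(ω). Then for all x, x' ∈ ℝ^d, the expectation of the product of random features z_ω(x)·z_ω(x') = 2·cos(⟨ω, x⟩ + b)·cos(⟨ω, x'⟩ + b), taken over ω ~ μ and b ~ Uniform[0, 2π] independent, equals K(x − x'); that is, ∫_{ℝ^d} (1/(2π)) ∫_{0}^{2π} 2·cos(⟨ω, x⟩ + b)·cos(⟨ω, x'⟩ + b) db dμ(ω) = K(x − x'). -/

import Mathlib

open Real MeasureTheory intervalIntegral RealInnerProductSpace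

lemma rff_inner_integral (a c : ℝ) :
    (1 / (2 * Real.pi)) * ∫ b in (0 : ℝ)..(2 * Real.pi),
      2 * Real.cos (a + b) * Real.cos (c + b) = Real.cos (a - c) := by
  have hpt : ∀ b : ℝ, 2 * Real.cos (a+b) * Real.cos (c+b)
      = Real.cos (a-c) + Real.cos ((a+c) + 2*b) := by
    intro b
    simp only [Real.cos_add, Real.sin_add, Real.cos_sub, Real.cos_two_mul, Real.sin_two_mul]
    linear_combination (2*Real.sin a*Real.sin c)*(Real.sin_sq_add_cos_sq b)
  simp_rw [hpt]
  rw [intervalIntegral.integral_add (intervalIntegrable_const) ((by fun_prop : Continuous fun b : ℝ => Real.cos (a + c + 2 * b)).intervalIntegrable _ _)]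
  have h2 : ∫ b in (0:ℝ)..(2*Real.pi), Real.cos ((a+c) + 2*b) = 0 := by
    have h : ∀ b : ℝ, (a+c) + 2*b = 2*b + (a+c) := by intro b; ring
    simp_rw [h]
    rw [intervalIntegral.integral_comp_mul_add Real.cos (by norm_num : (2:ℝ) ≠ 0) (a+c)]
    rw [integral_cos]
    have : 2 * (2*Real.pi) + (a+c) = (a+c) + 2*(2*Real.pi) := by ring
    rw [this]
    simp [Real.sin_add_two_pi, two_mul, ← add_assoc]
  rw [h2, intervalIntegral.integral_const]
  field_simp
  simp

/-- For a spectral probability measure `μ` on `ℝ^d` and the kernel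
`K u = ∫ ω, cos ⟪ω, u⟫ ∂μ`, the expectation of the product of random features
`2 * cos (⟪ω, x⟫ + b) * cos (⟪ω, x'⟫ + b)` over `ω ~ μ` and `b ~ Uniform[0, 2π]`
equals `K (x - x')`. -/
theorem random_feature_kernel_expectation
    (d : ℕ) (μ : Measure (EuclideanSpace ℝ (Fin d))) [IsProbabilityMeasure μ]
    (K : EuclideanSpace ℝ (Fin d) → ℝ)
    (hK : ∀ u, K u = ∫ ω, Real.cos ⟪ω, u⟫ ∂μ) :
    ∀ x x' : EuclideanSpace ℝ (Fin d),
      (∫ ω, ((1 / (2 * Real.pi)) * ∫ b in (0 : ℝ)..(2 * Real.pi),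
        2 * Real.cos (⟪ω, x⟫ + b) * Real.cos (⟪ω, x'⟫ + b)) ∂μ) = K (x - x') := by
  intro x x'
  rw [hK]
  congr 1
  funext ω
  rw [rff_inner_integral, inner_sub_right]
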